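/- Let X be a compact metric space, B ⊆ X closed and C ⊆ X with B ∪ C = X. Suppose F' is a finite family of continuous maps X → B constant on C with F'(X) = B and each map having Lipschitz constant < 1 on B, and P' is a finite family of continuous maps X → C constant on C with P'(X) = C. Then (X, F' ∪ P') is a topological fractal. -/

import Mathlib

open Set

/-- Composition of a list of self-maps. -/
def Comp {X : Type*} (l : List (X → X)) : X → X := l.foldr (· ∘ ·) id

/-- `F` is a topologically contracting system on `Y ⊆ X`. -/
def TopContracting {X : Type*} [TopologicalSpace X] (F : Set (X → X)) (Y : Set X) : Prop :=
  ∀ 𝒰 : Set (Set X), (∀ U ∈ 𝒰, IsOpen U) → Y ⊆ ⋃₀ 𝒰 →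
    ∃ n : ℕ, ∀ l : List (X → X), l.length = n → (∀ f ∈ l, f ∈ F) →
      ∃ U ∈ 𝒰, Comp l '' Y ⊆ U

/-- `(X, F)` is a topological fractal (whole-space version). -/
def TopFractal {X : Type*} [TopologicalSpace X] (F : Set (X → X)) : Prop :=
  F.Finite ∧ (∀ f ∈ F, Continuous f) ∧ (⋃ f ∈ F, Set.range f) = Set.univ ∧
    TopContracting F Set.univ

lemma LipschitzOnWith.weaken' {X : Type*} [PseudoEMetricSpace X] {f : X → X}
    {s : Set X} {K K' : NNReal} (h : LipschitzOnWith K f s) (hK : K ≤ K') :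
    LipschitzOnWith K' f s := fun x hx y hy =>
  (h hx hy).trans (mul_le_mul_of_nonneg_right (ENNReal.coe_le_coe.mpr hK) zero_le')

lemma Comp_cons {X : Type*} (f : X → X) (l : List (X → X)) :
    Comp (f :: l) = f ∘ Comp l := rfl

lemma Comp_append {X : Type*} (l₁ l₂ : List (X → X)) :
    Comp (l₁ ++ l₂) = Comp l₁ ∘ Comp l₂ := by
  induction l₁ with
  | nil => rfl
  | cons f l ih => rw [List.cons_append, Comp_cons, ih]; rfl

lemma comp_const_on {X : Type*} {G : Set (X → X)} {C : Set X}
    (hconst : ∀ g ∈ G, ∃ c, ∀ x ∈ C, g x = c) :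
    ∀ l : List (X → X), l ≠ [] → (∀ g ∈ l, g ∈ G) →
      ∀ x ∈ C, ∀ y ∈ C, Comp l x = Comp l y := by
  intro l
  induction l with
  | nil => intro h; exact absurd rfl h
  | cons g l ih =>
    intro _ hmem x hx y hy
    by_cases hl : l = []
    · subst hl
      obtain ⟨c, hc⟩ := hconst g (hmem g (List.mem_cons_self))
      show g (Comp [] x) = g (Comp [] y)
      show g x = g y
      rw [hc x hx, hc y hy]
    · show g (Comp l x) = g (Comp l y)
      rw [ih hl (fun f hf => hmem f (List.mem_cons_of_mem _ hf)) x hx y hy]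

theorem stmt17 {X : Type*} [MetricSpace X] [CompactSpace X]
    (B C : Set X) (hB : IsClosed B) (hBC : B ∪ C = Set.univ)
    (F' P' : Set (X → X)) (hF'fin : F'.Finite) (hP'fin : P'.Finite)
    (hF' : ∀ g ∈ F', Continuous g ∧ Set.range g ⊆ B ∧
        (∃ c : X, ∀ x ∈ C, g x = c) ∧ ∃ K : NNReal, K < 1 ∧ LipschitzOnWith K g B)
    (hF'B : (⋃ g ∈ F', Set.range g) = B)
    (hP' : ∀ q ∈ P', Continuous q ∧ Set.range q ⊆ C ∧ ∃ c : X, ∀ x ∈ C, q x = c)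
    (hP'C : (⋃ q ∈ P', Set.range q) = C) :
    TopFractal (F' ∪ P') := by
  classical
  have hfin : (F' ∪ P').Finite := hF'fin.union hP'fin
  have hcont : ∀ f ∈ F' ∪ P', Continuous f := by
    rintro f (hf | hf)
    exacts [(hF' f hf).1, (hP' f hf).1]
  refine ⟨hfin, hcont, ?_, ?_⟩
  · rw [biUnion_union, hF'B, hP'C, hBC]
  · -- TopContracting
    intro 𝒰 hopen hcover
    by_cases hne : (F' ∪ P').Nonempty
    swap
    · rw [Set.not_nonempty_iff_eq_empty] at hne
      refine ⟨1, ?_⟩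
      intro l hlen hmem
      obtain ⟨f, rfl⟩ := List.length_eq_one_iff.mp hlen
      have := hmem f (List.mem_cons_self)
      rw [hne] at this
      exact absurd this (notMem_empty f)
    have hX : Nonempty X := by
      rcases hne with ⟨g, hg | hg⟩
      · exact ⟨(hF' g hg).2.2.1.choose⟩
      · exact ⟨(hP' g hg).2.2.choose⟩
    obtain ⟨x0⟩ := hX
    -- common Lipschitz constant
    set Kfun : (X → X) → NNReal :=
      fun g => if h : g ∈ F' then (hF' g h).2.2.2.choose else 0 with hKfun
    set K : NNReal := hF'fin.toFinset.sup Kfun with hKdef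
    have hK1 : K < 1 := by
      rw [hKdef]
      refine Finset.sup_lt_iff (by norm_num) |>.mpr ?_
      intro g hg
      rw [Set.Finite.mem_toFinset] at hg
      rw [hKfun]
      simp only [dif_pos hg]
      exact (hF' g hg).2.2.2.choose_spec.1
    have hKlip : ∀ g ∈ F', LipschitzOnWith K g B := by
      intro g hg
      have h1 : Kfun g ≤ K := Finset.le_sup (Set.Finite.mem_toFinset hF'fin |>.mpr hg)
      have h2 : Kfun g = (hF' g hg).2.2.2.choose := by rw [hKfun]; simp [dif_pos hg]
      exact ((hF' g hg).2.2.2.choose_spec.2).weaken' (h2 ▸ h1)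
    have hbdd : ∀ s : Set X, Bornology.IsBounded s :=
      fun s => (isCompact_univ.isBounded).subset (subset_univ s)
    have hdiam_step : ∀ g ∈ F', ∀ s : Set X, s ⊆ B →
        Metric.diam (g '' s) ≤ K * Metric.diam s := by
      intro g hg s hsB
      apply Metric.diam_le_of_forall_dist_le (by positivity)
      rintro _ ⟨x, hx, rfl⟩ _ ⟨y, hy, rfl⟩
      calc dist (g x) (g y) ≤ K * dist x y :=
            (hKlip g hg).dist_le_mul x (hsB hx) y (hsB hy)
        _ ≤ K * Metric.diam s :=
            mul_le_mul_of_nonneg_left (Metric.dist_le_diam_of_mem (hbdd s) hx hy) K.2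
    set D := Metric.diam (univ : Set X) with hD
    have hD0 : 0 ≤ D := Metric.diam_nonneg
    have hcontr : ∀ l : List (X → X), l ≠ [] → (∀ g ∈ l, g ∈ F') →
        Comp l '' univ ⊆ B ∧
          Metric.diam (Comp l '' univ) ≤ (K : ℝ) ^ (l.length - 1) * D := by
      intro l
      induction l with
      | nil => intro h; exact absurd rfl h
      | cons g l ih =>
        intro _ hmem
        have hg := hmem g (List.mem_cons_self)
        have himg : Comp (g :: l) '' univ = g '' (Comp l '' univ) := by
          rw [Comp_cons, image_comp]
        by_cases hl : l = []
        · subst hl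
          constructor
          · rw [himg]
            rintro _ ⟨x, -, rfl⟩
            exact (hF' g hg).2.1 ⟨x, rfl⟩
          · simpa using Metric.diam_mono (subset_univ _) (hbdd _)
        · obtain ⟨hsub, hdi⟩ := ih hl (fun f hf => hmem f (List.mem_cons_of_mem _ hf))
          constructor
          · rw [himg]
            rintro _ ⟨x, -, rfl⟩
            exact (hF' g hg).2.1 ⟨x, rfl⟩
          · rw [himg]
            have hlen : l.length - 1 + 1 = l.length :=
              Nat.succ_pred_eq_of_pos (List.length_pos_iff.mpr hl)
            calc Metric.diam (g '' (Comp l '' univ))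
                ≤ K * Metric.diam (Comp l '' univ) := hdiam_step g hg _ hsub
              _ ≤ K * ((K : ℝ) ^ (l.length - 1) * D) :=
                  mul_le_mul_of_nonneg_left hdi K.2
              _ = (K : ℝ) ^ ((g :: l).length - 1) * D := by
                  have h3 : (g :: l).length - 1 = l.length - 1 + 1 := by
                    simp only [List.length_cons]; omega
                  rw [h3, pow_succ]; ring
    -- Lebesgue number
    obtain ⟨δ, hδ0, hδ⟩ := lebesgue_number_lemma_of_metric_sUnion isCompact_univ hopen hcover
    -- uniform continuity
    have hUC : ∀ f ∈ F' ∪ P', ∃ e > 0, ∀ a b : X, dist a b < e → dist (f a) (f b) < δ := by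
      intro f hf
      exact Metric.uniformContinuous_iff.mp
        (CompactSpace.uniformContinuous_of_continuous (hcont f hf)) δ hδ0
    set εfun : (X → X) → ℝ :=
      fun f => if h : f ∈ F' ∪ P' then (hUC f h).choose else 1 with hεfun
    have hTne : hfin.toFinset.Nonempty := by
      rwa [Set.Finite.toFinset_nonempty]
    set ε : ℝ := hfin.toFinset.inf' hTne εfun with hεdef
    have hε0 : 0 < ε := by
      rw [hεdef, Finset.lt_inf'_iff]
      intro f hf
      rw [Set.Finite.mem_toFinset] at hf
      rw [hεfun]; simp only [dif_pos hf]
      exact (hUC f hf).choose_spec.1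
    have hε : ∀ f ∈ F' ∪ P', ∀ a b : X, dist a b < ε → dist (f a) (f b) < δ := by
      intro f hf a b hab
      have h1 : ε ≤ εfun f := Finset.inf'_le εfun (Set.Finite.mem_toFinset hfin |>.mpr hf)
      have h2 : εfun f = (hUC f hf).choose := dif_pos hf
      exact (hUC f hf).choose_spec.2 a b (lt_of_lt_of_le hab (h2 ▸ h1))
    -- choose n
    obtain ⟨n, hn⟩ := exists_pow_lt_of_lt_one (by positivity : (0 : ℝ) < ε / (D + 1))
      (by exact_mod_cast hK1 : (K : ℝ) < 1)
    have hKnD : (K : ℝ) ^ n * D < ε := by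
      calc (K : ℝ) ^ n * D ≤ (K : ℝ) ^ n * (D + 1) :=
            mul_le_mul_of_nonneg_left (by linarith) (pow_nonneg K.2 n)
        _ < (ε / (D + 1)) * (D + 1) := mul_lt_mul_of_pos_right hn (by linarith)
        _ = ε := div_mul_cancel₀ ε (by linarith)
    refine ⟨n + 2, ?_⟩
    intro l hlen hmemL
    match l, hlen with
    | f :: m, hlen =>
    have hm_len : m.length = n + 1 := by
      simpa using hlen
    have hmne : m ≠ [] := by
      intro h; rw [h] at hm_len; simp at hm_len
    by_cases hall : ∀ g ∈ m, g ∈ F'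
    · -- contracting case
      obtain ⟨hsub, hdi⟩ := hcontr m hmne hall
      have hdi' : Metric.diam (Comp m '' univ) < ε := by
        rw [hm_len] at hdi
        simpa using lt_of_le_of_lt hdi hKnD
      obtain ⟨U, hU, hball⟩ := hδ (Comp (f :: m) x0) (mem_univ _)
      refine ⟨U, hU, ?_⟩
      rintro _ ⟨x, -, rfl⟩
      apply hball
      rw [Metric.mem_ball]
      show dist (f (Comp m x)) (f (Comp m x0)) < δ
      apply hε f (hmemL f (List.mem_cons_self))
      calc dist (Comp m x) (Comp m x0)
          ≤ Metric.diam (Comp m '' univ) :=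
            Metric.dist_le_diam_of_mem (hbdd _) ⟨x, mem_univ x, rfl⟩ ⟨x0, mem_univ x0, rfl⟩
        _ < ε := hdi'
    · -- constant case
      push_neg at hall
      obtain ⟨q, hq_mem, hqF⟩ := hall
      have hqP : q ∈ P' :=
        (hmemL q (List.mem_cons_of_mem f hq_mem)).resolve_left hqF
      obtain ⟨m1, m2, rfl⟩ := List.append_of_mem hq_mem
      have hsplit : Comp (f :: (m1 ++ q :: m2)) = Comp (f :: m1) ∘ Comp (q :: m2) := by
        rw [show f :: (m1 ++ q :: m2) = (f :: m1) ++ (q :: m2) from rfl, Comp_append]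
      have hconstC : ∀ g ∈ F' ∪ P', ∃ c, ∀ x ∈ C, g x = c := by
        rintro g (hg | hg)
        exacts [(hF' g hg).2.2.1, (hP' g hg).2.2]
      have hin : ∀ z : X, Comp (q :: m2) z ∈ C := fun z => (hP' q hqP).2.1 ⟨Comp m2 z, rfl⟩
      have hconst : ∀ x : X,
          Comp (f :: (m1 ++ q :: m2)) x = Comp (f :: (m1 ++ q :: m2)) x0 := by
        intro x
        rw [hsplit]
        refine comp_const_on hconstC (f :: m1) (by simp) ?_ _ (hin x) _ (hin x0)
        intro g hg
        apply hmemL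
        simp only [List.mem_cons, List.mem_append] at hg ⊢
        tauto
      obtain ⟨U, hU, hpU⟩ := hcover (mem_univ (Comp (f :: (m1 ++ q :: m2)) x0))
      refine ⟨U, hU, ?_⟩
      rintro _ ⟨x, -, rfl⟩
      rw [hconst x]
      exact hpU
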